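/- For every real number α > 2, the ratio of the area spectral efficiency of full SDMA with M antennas to that of SISO, which equals M · C(α, 1) / C(α, M), satisfies lim_{M → ∞} [ M · C(α, 1) / C(α, M) ] / M^{1 − 2/α} = Γ(1 + 2/α), where the limit is over positive integers M and Γ is the Gamma function. -/

import Mathlib

open MeasureTheory Real Filter

/-- Euler's Beta function `B(a, b) = ∫_0^1 t^(a-1) (1-t)^(b-1) dt`. -/
noncomputable def betaFn (a b : ℝ) : ℝ :=
  ∫ t in (0:ℝ)..1, t ^ (a - 1) * (1 - t) ^ (b - 1)

/-- The constant `C(α, Ψ) = (2π/α) Σ_{m=1}^{Ψ} binom(Ψ,m) B(Ψ - m + 2/α, m - 2/α)`. -/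
noncomputable def Cfun (α : ℝ) (Ψ : ℕ) : ℝ :=
  (2 * π / α) * ∑ m ∈ Finset.Icc 1 Ψ,
    (Ψ.choose m : ℝ) * betaFn ((Ψ : ℝ) - m + 2 / α) ((m : ℝ) - 2 / α)

lemma betaFn_eq (a b : ℝ) (ha : 0 < a) (hb : 0 < b) :
    betaFn a b = Real.Gamma a * Real.Gamma b / Real.Gamma (a + b) := by
  have h := Complex.Gamma_mul_Gamma_eq_betaIntegral (s := (a:ℂ)) (t := (b:ℂ))
    (by simpa using ha) (by simpa using hb)
  have hbeta : Complex.betaIntegral a b = (betaFn a b : ℂ) := by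
    rw [Complex.betaIntegral, betaFn, ← intervalIntegral.integral_ofReal]
    refine intervalIntegral.integral_congr fun x hx => ?_
    rw [Set.uIcc_of_le (by norm_num : (0:ℝ) ≤ 1)] at hx
    obtain ⟨hx0, hx1⟩ := hx
    rw [Complex.ofReal_mul, Complex.ofReal_cpow hx0, Complex.ofReal_cpow (by linarith),
      Complex.ofReal_sub, Complex.ofReal_sub, Complex.ofReal_one]
    push_cast
    ring
  rw [hbeta, ← Complex.ofReal_add, Complex.Gamma_ofReal, Complex.Gamma_ofReal,
    Complex.Gamma_ofReal, ← Complex.ofReal_mul, ← Complex.ofReal_mul] at h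
  have := Complex.ofReal_inj.mp h
  rw [this]
  field_simp

lemma Gamma_prod (s : ℝ) (hs : 0 < s) (n : ℕ) :
    Real.Gamma (s + n) = Real.Gamma s * ∏ j ∈ Finset.range n, (s + j) := by
  induction n with
  | zero => simp
  | succ n ih =>
    have h1 : (s + (n+1:ℕ) : ℝ) = (s + n) + 1 := by push_cast; ring
    rw [h1, Real.Gamma_add_one (by positivity), ih, Finset.prod_range_succ]
    ring

lemma key_sum (s : ℝ) (hs0 : 0 < s) (hs1 : s < 1) (n : ℕ) :
    ∑ i ∈ Finset.range (n+1), ((n+1).choose (i+1) : ℝ) *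
      (Real.Gamma ((n:ℝ) - i + s) * Real.Gamma ((i:ℝ) + 1 - s))
    = Real.Gamma (1 - s) * Real.Gamma ((n:ℝ) + 1 + s) / s := by
  induction n with
  | zero =>
    rw [Finset.range_one, Finset.sum_singleton]
    norm_num
    rw [show (1:ℝ) + s = s + 1 by ring, Real.Gamma_add_one (ne_of_gt hs0)]
    field_simp
  | succ n ih =>
    have hrw : ∀ i ∈ Finset.range (n+2), ((n+2).choose (i+1) : ℝ) *
        (Real.Gamma (((n+1:ℕ):ℝ) - i + s) * Real.Gamma ((i:ℝ) + 1 - s))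
        = ((n+1).choose i : ℝ) * (Real.Gamma (((n+1:ℕ):ℝ) - i + s) * Real.Gamma ((i:ℝ) + 1 - s))
        + ((n+1).choose (i+1) : ℝ) * (Real.Gamma (((n+1:ℕ):ℝ) - i + s) * Real.Gamma ((i:ℝ) + 1 - s)) := by
      intro i _
      rw [Nat.choose_succ_succ (n+1) i]
      push_cast
      ring
    rw [Finset.sum_congr rfl hrw, Finset.sum_add_distrib]
    rw [Finset.sum_range_succ' (fun i => ((n+1).choose i : ℝ) *
        (Real.Gamma (((n+1:ℕ):ℝ) - i + s) * Real.Gamma ((i:ℝ) + 1 - s))) (n+1)]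
    rw [Finset.sum_range_succ (fun i => ((n+1).choose (i+1) : ℝ) *
        (Real.Gamma (((n+1:ℕ):ℝ) - i + s) * Real.Gamma ((i:ℝ) + 1 - s))) (n+1)]
    have hzero : ((n+1).choose (n+2) : ℝ) = 0 := by
      rw [Nat.choose_eq_zero_of_lt (by omega)]; norm_num
    rw [hzero]
    have hS1 : ∀ j ∈ Finset.range (n+1), ((n+1).choose (j+1) : ℝ) *
        (Real.Gamma (((n+1:ℕ):ℝ) - (j+1:ℕ) + s) * Real.Gamma (((j+1:ℕ):ℝ) + 1 - s))
        = ((j:ℝ) + 1 - s) * (((n+1).choose (j+1) : ℝ) *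
          (Real.Gamma ((n:ℝ) - j + s) * Real.Gamma ((j:ℝ) + 1 - s))) := by
      intro j _
      have h2 : (((j+1:ℕ):ℝ) + 1 - s) = ((j:ℝ) + 1 - s) + 1 := by push_cast; ring
      have h3 : (((n+1:ℕ):ℝ) - (j+1:ℕ) + s) = (n:ℝ) - j + s := by push_cast; ring
      have h4 : (j:ℝ) + 1 - s ≠ 0 := by
        have : (0:ℝ) ≤ (j:ℝ) := Nat.cast_nonneg j
        intro h; nlinarith
      rw [h2, h3, Real.Gamma_add_one h4]
      ring
    rw [Finset.sum_congr rfl hS1]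
    have hS2 : ∀ i ∈ Finset.range (n+1), ((n+1).choose (i+1) : ℝ) *
        (Real.Gamma (((n+1:ℕ):ℝ) - i + s) * Real.Gamma ((i:ℝ) + 1 - s))
        = ((n:ℝ) - i + s) * (((n+1).choose (i+1) : ℝ) *
          (Real.Gamma ((n:ℝ) - i + s) * Real.Gamma ((i:ℝ) + 1 - s))) := by
      intro i hi
      have hi' : i ≤ n := by simpa using Nat.lt_succ_iff.mp (Finset.mem_range.mp hi)
      have h5 : (0:ℝ) < (n:ℝ) - i + s := by
        have : (i:ℝ) ≤ (n:ℝ) := by exact_mod_cast hi'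
        linarith
      have h6 : (((n+1:ℕ):ℝ) - i + s) = ((n:ℝ) - i + s) + 1 := by push_cast; ring
      rw [h6, Real.Gamma_add_one (ne_of_gt h5)]
      ring
    rw [Finset.sum_congr rfl hS2]
    have hcomb : (∑ j ∈ Finset.range (n+1), ((j:ℝ) + 1 - s) * (((n+1).choose (j+1) : ℝ) *
          (Real.Gamma ((n:ℝ) - j + s) * Real.Gamma ((j:ℝ) + 1 - s))))
        + (∑ i ∈ Finset.range (n+1), ((n:ℝ) - i + s) * (((n+1).choose (i+1) : ℝ) *
          (Real.Gamma ((n:ℝ) - i + s) * Real.Gamma ((i:ℝ) + 1 - s))))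
        = ((n:ℝ) + 1) * ∑ i ∈ Finset.range (n+1), (((n+1).choose (i+1) : ℝ) *
          (Real.Gamma ((n:ℝ) - i + s) * Real.Gamma ((i:ℝ) + 1 - s))) := by
      rw [← Finset.sum_add_distrib, Finset.mul_sum]
      refine Finset.sum_congr rfl fun i _ => by ring
    have hG : Real.Gamma (((n+1:ℕ):ℝ) + 1 + s) = ((n:ℝ) + 1 + s) * Real.Gamma ((n:ℝ) + 1 + s) := by
      have h7 : (((n+1:ℕ):ℝ) + 1 + s) = ((n:ℝ) + 1 + s) + 1 := by push_cast; ring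
      have h8 : (0:ℝ) < (n:ℝ) + 1 + s := by positivity
      rw [h7, Real.Gamma_add_one (ne_of_gt h8)]
    push_cast
    push_cast at hcomb ih hG
    rw [hG, ih] at *
    rw [ih] at hcomb
    have hs := ne_of_gt hs0
    norm_num
    field_simp at hcomb ⊢
    linear_combination hcomb

lemma Cfun_closed (α : ℝ) (hα : 2 < α) (n : ℕ) :
    Cfun α (n+1) = (2 * π / α) * (Real.Gamma (1 - 2/α) * Real.Gamma ((n:ℝ) + 1 + 2/α) / (2/α))
      / Real.Gamma ((n:ℝ) + 1) := by
  have hα0 : (0:ℝ) < α := by linarith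
  have hs0 : (0:ℝ) < 2/α := by positivity
  have hs1 : 2/α < 1 := by rw [div_lt_one hα0]; linarith
  rw [Cfun, ← Finset.Ico_add_one_right_eq_Icc, Finset.sum_Ico_eq_sum_range]
  norm_num
  have hterm : ∀ i ∈ Finset.range (n+1),
      (((n+1).choose (1+i) : ℝ) * betaFn ((n:ℝ) + 1 - (1 + (i:ℝ)) + 2/α) (1 + (i:ℝ) - 2/α))
      = (((n+1).choose (i+1) : ℝ) * (Real.Gamma ((n:ℝ) - i + 2/α) * Real.Gamma ((i:ℝ) + 1 - 2/α)))
        / Real.Gamma ((n:ℝ) + 1) := by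
    intro i hi
    have hi' : i ≤ n := Nat.lt_succ_iff.mp (Finset.mem_range.mp hi)
    have hin : (i:ℝ) ≤ (n:ℝ) := by exact_mod_cast hi'
    have ha : ((n:ℝ) + 1 - (1 + (i:ℝ)) + 2/α) = (n:ℝ) - i + 2/α := by ring
    have hb : ((1:ℝ) + (i:ℝ) - 2/α) = (i:ℝ) + 1 - 2/α := by ring
    rw [ha, hb, betaFn_eq _ _ (by linarith) (by linarith)]
    rw [show ((n:ℝ) - i + 2/α + ((i:ℝ) + 1 - 2/α)) = (n:ℝ) + 1 by ring, Nat.add_comm 1 i]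
    ring
  rw [Finset.sum_congr rfl hterm, ← Finset.sum_div, key_sum (2/α) hs0 hs1 n]
  ring

/-- For `α > 2`, the ASE ratio `M C(α,1)/C(α,M)` satisfies
`[M C(α,1)/C(α,M)] / M^{1 − 2/α} → Γ(1 + 2/α)` as `M → ∞` over positive integers. -/
theorem ASE_ratio_asymptotics (α : ℝ) (hα : 2 < α) :
    Tendsto (fun M : ℕ => ((M : ℝ) * Cfun α 1 / Cfun α M) / (M : ℝ) ^ (1 - 2 / α)) atTop
      (nhds (Real.Gamma (1 + 2 / α))) := by
  have hα0 : (0:ℝ) < α := by linarith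
  set s : ℝ := 2/α with hsdef
  have hs0 : 0 < s := by positivity
  have hs1 : s < 1 := by rw [hsdef, div_lt_one hα0]; linarith
  have hπ : (0:ℝ) < π := Real.pi_pos
  have hG1s : (0:ℝ) < Real.Gamma (1 - s) := Real.Gamma_pos_of_pos (by linarith)
  -- the Gamma ratio limit
  have hratio : Tendsto (fun n : ℕ => (n:ℝ) ^ s * Real.Gamma ((n:ℝ) + 1)
      / Real.Gamma (s + ((n:ℝ) + 1))) atTop (nhds 1) := by
    have hGs : Real.Gamma s ≠ 0 := ne_of_gt (Real.Gamma_pos_of_pos hs0)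
    have heq : ∀ n : ℕ, Real.GammaSeq s n / Real.Gamma s
        = (n:ℝ) ^ s * Real.Gamma ((n:ℝ) + 1) / Real.Gamma (s + ((n:ℝ) + 1)) := by
      intro n
      have hp : Real.Gamma (s + ((n+1:ℕ):ℝ)) = Real.Gamma s * ∏ j ∈ Finset.range (n+1), (s + j) :=
        Gamma_prod s hs0 (n+1)
      have hprod_ne : (∏ j ∈ Finset.range (n+1), (s + (j:ℝ))) ≠ 0 := by
        refine Finset.prod_ne_zero_iff.mpr fun j _ => ?_
        have : (0:ℝ) ≤ (j:ℝ) := Nat.cast_nonneg j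
        positivity
      rw [Real.GammaSeq, ← Real.Gamma_nat_eq_factorial n,
        show (s + ((n:ℝ) + 1)) = s + ((n+1:ℕ):ℝ) by push_cast; ring, hp]
      ring
    have h1 := (Real.GammaSeq_tendsto_Gamma s).div_const (Real.Gamma s)
    rw [div_self hGs] at h1
    exact h1.congr heq
  -- (1 + 1/n)^s → 1
  have hpow : Tendsto (fun n : ℕ => ((1:ℝ) + 1/(n:ℝ)) ^ s) atTop (nhds 1) := by
    have h2 : Tendsto (fun n : ℕ => (1:ℝ) + 1/(n:ℝ)) atTop (nhds 1) := by
      have := tendsto_one_div_atTop_nhds_zero_nat (𝕜 := ℝ)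
      simpa using (tendsto_const_nhds (x := (1:ℝ)) (f := atTop)).add this
    have hc : ContinuousAt (fun x : ℝ => x ^ s) 1 :=
      Real.continuousAt_rpow_const 1 s (Or.inl one_ne_zero)
    have := hc.tendsto.comp h2
    simpa [Real.one_rpow, Function.comp_def] using this
  -- g (n+1) → 1
  have hg1 : Tendsto (fun n : ℕ => (((n+1:ℕ):ℝ)) ^ s * Real.Gamma (((n+1:ℕ):ℝ))
      / Real.Gamma (((n+1:ℕ):ℝ) + s)) atTop (nhds 1) := by
    have hmul := hpow.mul hratio
    rw [mul_one] at hmul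
    refine hmul.congr' ?_
    filter_upwards [eventually_ge_atTop 1] with n hn
    have hn0 : (0:ℝ) < (n:ℝ) := by exact_mod_cast hn
    have hkey : ((1:ℝ) + 1/(n:ℝ)) ^ s * (n:ℝ) ^ s = ((n:ℝ) + 1) ^ s := by
      rw [← Real.mul_rpow (by positivity) (by positivity)]
      congr 1
      field_simp
    rw [show (((n+1:ℕ):ℝ)) = (n:ℝ) + 1 by push_cast; ring]
    rw [show (((n:ℝ) + 1) + s) = s + ((n:ℝ) + 1) by ring]
    rw [← hkey]
    ring
  have hg : Tendsto (fun M : ℕ => ((M:ℝ)) ^ s * Real.Gamma ((M:ℝ))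
      / Real.Gamma ((M:ℝ) + s)) atTop (nhds 1) := by
    rw [← Filter.tendsto_add_atTop_iff_nat 1]
    exact hg1
  have hfinal := (tendsto_const_nhds (x := Real.Gamma (1 + s)) (f := atTop (α := ℕ))).mul hg
  rw [mul_one] at hfinal
  refine hfinal.congr' ?_
  filter_upwards [eventually_ge_atTop 1] with M hM
  obtain ⟨n, rfl⟩ : ∃ n, M = n + 1 := ⟨M - 1, by omega⟩
  have hC1 : Cfun α 1 = (2 * π / α) * (Real.Gamma (1 - s) * Real.Gamma (1 + s) / s) := by
    have := Cfun_closed α hα 0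
    rw [this]
    norm_num [Real.Gamma_one]
    exact Or.inl (by rw [hsdef])
  have hCM : Cfun α (n+1) = (2 * π / α) * (Real.Gamma (1 - s) * Real.Gamma ((n:ℝ) + 1 + s) / s)
      / Real.Gamma ((n:ℝ) + 1) := Cfun_closed α hα n
  have hM0 : (0:ℝ) < ((n+1:ℕ):ℝ) := by positivity
  have hGM : (0:ℝ) < Real.Gamma ((n:ℝ) + 1) := Real.Gamma_pos_of_pos (by positivity)
  have hGMs : (0:ℝ) < Real.Gamma ((n:ℝ) + 1 + s) := Real.Gamma_pos_of_pos (by positivity)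
  have hG1ps : (0:ℝ) < Real.Gamma (1 + s) := Real.Gamma_pos_of_pos (by positivity)
  have hrpow : ((n+1:ℕ):ℝ) ^ ((1:ℝ) - s) = ((n+1:ℕ):ℝ) / ((n+1:ℕ):ℝ) ^ s := by
    rw [Real.rpow_sub hM0, Real.rpow_one]
  have hrs : (0:ℝ) < ((n+1:ℕ):ℝ) ^ s := Real.rpow_pos_of_pos hM0 s
  rw [show (1 - 2/α) = (1:ℝ) - s by rw [hsdef]]
  rw [hC1, hCM, hrpow]
  rw [show (((n+1:ℕ):ℝ)) = (n:ℝ) + 1 by push_cast; ring] at *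
  have hs' : s ≠ 0 := ne_of_gt hs0
  field_simp
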